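/- If p : E → B is a fibration, then p has the weakly homotopically unique path lifting property (whupl) if and only if for every point e ∈ E the induced homomorphism p₊ : π₁(E, e) → π₁(B, p(e)) on fundamental groups is injective. -/

import Mathlib

universe u

open scoped unitInterval

/-- `p` has the weakly homotopically unique path lifting property (whupl). -/
def Whupl {E B : Type*} [TopologicalSpace E] [TopologicalSpace B] (p : C(E, B)) : Prop :=
  ∀ α β : C(unitInterval, E), α 0 = β 0 → α 1 = β 1 → p.comp α = p.comp β →
    α.HomotopicRel β {0, 1}

/-- `p` is a (Hurewicz) fibration: it has the homotopy lifting property with respect to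
every topological space. -/
def IsFibration {E B : Type*} [TopologicalSpace E] [TopologicalSpace B] (p : C(E, B)) : Prop :=
  ∀ (X : Type u) [TopologicalSpace X] (f : C(X, E)) (F : C(X × unitInterval, B)),
    (∀ x, F (x, 0) = p (f x)) →
    ∃ F' : C(X × unitInterval, E), (∀ z, p (F' z) = F z) ∧ (∀ x, F' (x, 0) = f x)

/-- The homomorphism induced by a continuous map `p` on fundamental groups. -/
noncomputable def inducedPi1Hom {E B : Type u} [TopologicalSpace E] [TopologicalSpace B]
    (p : C(E, B)) (e : E) :
    FundamentalGroup E e →* FundamentalGroup B (p e) :=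
  CategoryTheory.Functor.mapEnd _
    (FundamentalGroupoid.fundamentalGroupoidFunctor.map
      (X := TopCat.of E) (Y := TopCat.of B) (TopCat.ofHom p))

noncomputable section Aux

open CategoryTheory FundamentalGroupoid unitInterval

attribute [local instance] Path.Homotopic.setoid

open scoped FundamentalGroupoid

theorem Path.Homotopic.map_lift {X Y : Type*} [TopologicalSpace X] [TopologicalSpace Y]
    {x₀ x₁ : X} (P₀ : Path x₀ x₁) (f : C(X, Y)) :
    (⟦P₀.map f.continuous⟧ : Path.Homotopic.Quotient _ _) =
      Path.Homotopic.Quotient.map ⟦P₀⟧ f := rfl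

theorem Path.Homotopic.comp_lift {X : Type*} [TopologicalSpace X] {x₀ x₁ x₂ : X}
    (P₀ : Path x₀ x₁) (P₁ : Path x₁ x₂) :
    (⟦P₀.trans P₁⟧ : Path.Homotopic.Quotient x₀ x₂) =
      Path.Homotopic.Quotient.trans ⟦P₀⟧ ⟦P₁⟧ := rfl

private lemma pi_map_id' {Y : TopCat.{u}} {y₀ y₁ : Y} (q : Path y₀ y₁) :
    (πₘ (TopCat.ofHom (ContinuousMap.id Y))).map (⟦q⟧ : fromTop y₀ ⟶ fromTop y₁) = ⟦q⟧ := by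
  change (⟦q.map (ContinuousMap.id Y).continuous⟧ : Path.Homotopic.Quotient y₀ y₁) = ⟦q⟧
  exact congrArg _ q.map_id

private lemma sq_aux {C : Type*} [Category C] {x a b y d z c w : C}
    (pf : a ⟶ b) (r : b ⟶ d) (l : a ⟶ c) (pg : c ⟶ d)
    (h1 : x = a) (h2 : b = y) (h3 : y = b) (h4 : d = z) (h5 : x = a) (h6 : c = w)
    (h7 : w = c) (h8 : d = z)
    (key : (eqToHom h1 ≫ pf ≫ eqToHom h2) ≫ eqToHom h3 ≫ r ≫ eqToHom h4 =
      (eqToHom h5 ≫ l ≫ eqToHom h6) ≫ eqToHom h7 ≫ pg ≫ eqToHom h8) :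
    pf ≫ r = l ≫ pg := by
  subst h1 h2 h4 h6
  simpa using key

private lemma square_lemma' {Y : TopCat.{u}} {f g : C(TopCat.of (ULift.{u} I), Y)}
    (G : ContinuousMap.Homotopy f g) {a b c d : Y}
    (pf : Path a b) (pg : Path c d) (l : Path a c) (r : Path b d)
    (hpf : ∀ t, f (ULift.up t) = pf t) (hpg : ∀ t, g (ULift.up t) = pg t)
    (hl : ∀ t, G (t, ULift.up 0) = l t) (hr : ∀ t, G (t, ULift.up 1) = r t) :
    (⟦pf⟧ ≫ ⟦r⟧ : fromTop a ⟶ fromTop d) = ⟦l⟧ ≫ ⟦pg⟧ := by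
  have key := (G.eq_diag_path uhpath01).1.trans (G.eq_diag_path uhpath01).2.symm
  have hf := ContinuousMap.Homotopy.eq_path_of_eq_image
    (f := f) (g := ContinuousMap.id Y) (p := upath01) (q := pf) (fun t => hpf t)
  have hg := ContinuousMap.Homotopy.eq_path_of_eq_image
    (f := g) (g := ContinuousMap.id Y) (p := upath01) (q := pg) (fun t => hpg t)
  have hev0 := ContinuousMap.Homotopy.eq_path_of_eq_image
    (f := ContinuousMap.id Y) (g := ContinuousMap.id Y)
    (p := G.evalAt (ULift.up 0)) (q := l) (fun t => hl t)
  have hev1 := ContinuousMap.Homotopy.eq_path_of_eq_image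
    (f := ContinuousMap.id Y) (g := ContinuousMap.id Y)
    (p := G.evalAt (ULift.up 1)) (q := r) (fun t => hr t)
  rw [pi_map_id'] at hf hg hev0 hev1
  rw [pi_map_id'] at hev0 hev1
  unfold unitInterval.uhpath01 at key
  erw [hev0, hev1] at key
  simp only [hf, hg] at key
  exact sq_aux _ _ _ _ _ _ _ _ _ _ _ _ key

private lemma ptrans_const {E B : Type*} [TopologicalSpace E] [TopologicalSpace B]
    (p : C(E, B)) {x y z : E} (q1 : Path x y) (q2 : Path y z) {c : B}
    (h1 : ∀ s, p (q1 s) = c) (h2 : ∀ s, p (q2 s) = c) : ∀ t, p ((q1.trans q2) t) = c := by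
  intro t
  rw [Path.trans_apply]
  split_ifs <;> simp [h1, h2]

end Aux

theorem fibration_whupl_iff_pi1_injective {E B : Type u} [TopologicalSpace E]
    [TopologicalSpace B] (p : C(E, B)) (hp : IsFibration p) :
    Whupl p ↔ ∀ e : E, Function.Injective (inducedPi1Hom p e) := by
  classical
  letI : ∀ (x y : E), Setoid (Path x y) := fun x y => Path.Homotopic.setoid x y
  letI : ∀ (x y : B), Setoid (Path x y) := fun x y => Path.Homotopic.setoid x y
  open CategoryTheory FundamentalGroupoid in
  open scoped FundamentalGroupoid in
  constructor
  · -- whupl → injective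
    intro hw e
    rw [injective_iff_map_eq_one]
    intro g hg
    obtain ⟨γ, hγ⟩ := @Quotient.exists_rep (Path e e) (Path.Homotopic.setoid e e) g
    have hg' : (πₘ (TopCat.ofHom p)).map g
        = 𝟙 (fromTop (X := TopCat.of B) (p e)) := hg
    rw [← hγ] at hg'
    change (⟦γ.map p.continuous⟧ : Path.Homotopic.Quotient (p e) (p e)) = ⟦Path.refl (p e)⟧ at hg'
    have H : Path.Homotopy (γ.map p.continuous) (Path.refl (p e)) :=
      (Quotient.exact hg').some
    -- lift the nullhomotopy of `p ∘ γ` through the fibration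
    obtain ⟨F', hF'p, hF'0⟩ := hp (ULift I)
      ⟨fun x => γ x.down, γ.continuous.comp continuous_uliftDown⟩
      ⟨fun z => H (z.2, z.1.down),
        H.continuous.comp (continuous_snd.prodMk
          (continuous_uliftDown.comp continuous_fst))⟩
      (fun x => by simp)
    -- build the homotopy square in `E`
    let fE : C(TopCat.of (ULift.{u} I), TopCat.of E) :=
      ⟨fun x => γ x.down, γ.continuous.comp continuous_uliftDown⟩
    let uE : C(TopCat.of (ULift.{u} I), TopCat.of E) :=
      ⟨fun x => F' (ULift.up x.down, 1),
        F'.continuous.comp ((continuous_uliftUp.comp continuous_uliftDown).prodMk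
          continuous_const)⟩
    let G : ContinuousMap.Homotopy fE uE :=
      { toContinuousMap := ⟨fun z => F' (ULift.up z.2.down, z.1),
          F'.continuous.comp ((continuous_uliftUp.comp
            (continuous_uliftDown.comp continuous_snd)).prodMk continuous_fst)⟩
        map_zero_left := fun z => hF'0 _
        map_one_left := fun z => rfl }
    let w0 : E := F' (ULift.up 0, 1)
    let w1 : E := F' (ULift.up 1, 1)
    let l : Path e w0 := ⟨⟨fun t => F' (ULift.up 0, t),
        F'.continuous.comp (continuous_const.prodMk continuous_id)⟩,
      (hF'0 (ULift.up 0)).trans γ.source, rfl⟩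
    let r : Path e w1 := ⟨⟨fun t => F' (ULift.up 1, t),
        F'.continuous.comp (continuous_const.prodMk continuous_id)⟩,
      (hF'0 (ULift.up 1)).trans γ.target, rfl⟩
    let top : Path w0 w1 := ⟨⟨fun s => F' (ULift.up s, 1),
        F'.continuous.comp (continuous_uliftUp.prodMk continuous_const)⟩, rfl, rfl⟩
    have hsq := square_lemma' (Y := TopCat.of E) G γ top l r
      (fun t => rfl) (fun t => rfl) (fun t => rfl) (fun t => rfl)
    -- the three boundary paths project to the constant path
    have hpl : ∀ t, p (l t) = p e := fun t =>
      (hF'p (ULift.up 0, t)).trans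
        ((H.eq_fst t (by simp : (0:I) ∈ ({0,1} : Set I))).trans (congrArg p γ.source))
    have hpr : ∀ t, p (r t) = p e := fun t =>
      (hF'p (ULift.up 1, t)).trans
        ((H.eq_fst t (by simp : (1:I) ∈ ({0,1} : Set I))).trans (congrArg p γ.target))
    have hptop : ∀ s, p (top s) = p e := fun s =>
      (hF'p (ULift.up s, 1)).trans (H.toHomotopy.apply_one s)
    let δ : Path e e := l.trans (top.trans r.symm)
    have hδp : ∀ t, p (δ t) = p e :=
      ptrans_const p l (top.trans r.symm) hpl
        (ptrans_const p top r.symm hptop (fun s => hpr (unitInterval.symm s)))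
    have hδ1 : (⟦δ⟧ : fromTop (X := TopCat.of E) e ⟶ fromTop e) = ⟦Path.refl e⟧ := by
      apply Quotient.sound
      exact hw δ.toContinuousMap (Path.refl e).toContinuousMap
        (δ.source.trans (Path.refl e).source.symm)
        (δ.target.trans (Path.refl e).target.symm)
        (ContinuousMap.ext fun t => hδp t)
    have hrr : (⟦r⟧ ≫ ⟦r.symm⟧ : fromTop (X := TopCat.of E) e ⟶ fromTop e)
        = 𝟙 (fromTop (X := TopCat.of E) e) := by
      rw [show (⟦r⟧ ≫ ⟦r.symm⟧ : fromTop (X := TopCat.of E) e ⟶ fromTop e)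
        = ⟦r.trans r.symm⟧ from (Path.Homotopic.comp_lift r r.symm).symm]
      exact Quotient.sound ⟨(Path.Homotopy.reflTransSymm r).symm⟩
    have h5 := congrArg
      (fun z : fromTop (X := TopCat.of E) e ⟶ fromTop w1 =>
        z ≫ (⟦r.symm⟧ : fromTop (X := TopCat.of E) w1 ⟶ fromTop e)) hsq
    simp only [CategoryTheory.Category.assoc] at h5
    replace h5 : (⟦γ⟧ : fromTop (X := TopCat.of E) e ⟶ fromTop e) =
        (⟦l⟧ ≫ ⟦top⟧ ≫ ⟦r.symm⟧ : fromTop (X := TopCat.of E) e ⟶ fromTop e) :=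
      (Category.comp_id _).symm.trans ((congrArg (fun z => ⟦γ⟧ ≫ z) hrr).symm.trans
        ((Category.assoc _ _ _).symm.trans (h5.trans (Category.assoc _ _ _))))
    have h6 : (⟦l⟧ ≫ ⟦top⟧ ≫ ⟦r.symm⟧ : fromTop (X := TopCat.of E) e ⟶ fromTop e)
        = ⟦δ⟧ := by
      rw [show (⟦top⟧ ≫ ⟦r.symm⟧ : fromTop (X := TopCat.of E) w0 ⟶ fromTop e)
        = ⟦top.trans r.symm⟧ from (Path.Homotopic.comp_lift top r.symm).symm]
      exact (Path.Homotopic.comp_lift l (top.trans r.symm)).symm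
    show g = 𝟙 (fromTop (X := TopCat.of E) e)
    rw [← hγ, h5, h6, hδ1]
    rfl
  · -- injective → whupl
    intro h α β h0 h1 hc
    set x := α 0 with hx
    set y := α 1 with hy
    let a : Path x y := ⟨α, rfl, rfl⟩
    let b : Path x y := ⟨β, h0.symm, h1.symm⟩
    let ω : Path x x := a.trans b.symm
    let gg : FundamentalGroup E x :=
      ⟦ω⟧
    have hmap : a.map p.continuous = b.map p.continuous := by
      apply Path.ext
      funext t
      exact ContinuousMap.congr_fun hc t
    have hgg1 : inducedPi1Hom p x gg = 1 := by
      show (πₘ (TopCat.ofHom p)).map (⟦ω⟧ : fromTop (X := TopCat.of E) x ⟶ fromTop x) = 𝟙 (fromTop (X := TopCat.of B) (p x))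
      change (⟦ω.map p.continuous⟧ : Path.Homotopic.Quotient (p x) (p x)) = _
      show _ = (⟦Path.refl (p x)⟧ : Path.Homotopic.Quotient (p x) (p x))
      apply Quotient.sound
      have hω : ω.map p.continuous =
          (b.map p.continuous).trans (b.map p.continuous).symm := by
        rw [Path.map_trans, ← Path.map_symm, hmap]
      rw [hω]
      exact ⟨(Path.Homotopy.reflTransSymm (b.map p.continuous)).symm⟩
    have hgg : gg = 1 := h x (by rw [hgg1, map_one])
    have hωid : (⟦ω⟧ : fromTop (X := TopCat.of E) x ⟶ fromTop x)
        = 𝟙 (fromTop (X := TopCat.of E) x) := hgg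
    have hab : (⟦a⟧ : fromTop (X := TopCat.of E) x ⟶ fromTop y) = ⟦b⟧ := by
      have hbs : (⟦b.symm⟧ ≫ ⟦b⟧ : fromTop (X := TopCat.of E) y ⟶ fromTop y) = 𝟙 _ := by
        have h1' : (⟦b.symm⟧ ≫ ⟦b⟧ : fromTop (X := TopCat.of E) y ⟶ fromTop y)
            = ⟦b.symm.trans b⟧ := (Path.Homotopic.comp_lift b.symm b).symm
        rw [h1']
        show _ = (⟦Path.refl y⟧ : Path.Homotopic.Quotient y y)
        exact Quotient.sound ⟨(Path.Homotopy.reflSymmTrans b).symm⟩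
      have h3 : (⟦a⟧ ≫ ⟦b.symm⟧ : fromTop (X := TopCat.of E) x ⟶ fromTop x)
          = 𝟙 (fromTop (X := TopCat.of E) x) := by
        rw [show (⟦a⟧ ≫ ⟦b.symm⟧ : fromTop (X := TopCat.of E) x ⟶ fromTop x) = ⟦ω⟧ from
          (Path.Homotopic.comp_lift a b.symm).symm, hωid]
      have h4 := congrArg
        (fun z : fromTop (X := TopCat.of E) x ⟶ fromTop x =>
          z ≫ (⟦b⟧ : fromTop (X := TopCat.of E) x ⟶ fromTop y)) h3
      simp only [CategoryTheory.Category.assoc, CategoryTheory.Category.id_comp] at h4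
      exact (Category.comp_id _).symm.trans ((congrArg (fun z => ⟦a⟧ ≫ z) hbs).symm.trans
        ((Category.assoc _ _ _).symm.trans (h4.trans (Category.id_comp _))))
    exact Quotient.exact hab
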